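/- Let N be a positive integer, d a positive divisor of N, and Δ = gcd(d, N/d). Set h_d = [[1,d,0],[0,1,0],[0,0,1]] and w_d = (d,1,0)ᵀ, and let S′ be the subgroup of Γ₀(N,3)′ consisting of all γ with γ·w_d = w_d or γ·w_d = −w_d. Then: (i) for every γ ∈ S′ the matrix m = h_d⁻¹ γ h_d has vanishing (1,2) and (3,2) entries; (ii) the map π′_d : S′ → GL₂(ℤ) sending γ to the matrix [[m₁₁, m₁₃],[m₃₁, m₃₃]], where m = h_d⁻¹ γ h_d, is a group homomorphism; (iii) the image of π′_d is exactly the set of matrices [[a,b],[c,D]] ∈ GL₂(ℤ) with det ±1, b ≡ 0 (mod d), and a ≡ det (mod Δ) (i.e. the group of transposes of elements of Γ₁(d,Δ)^*); and (iv) the kernel of π′_d is isomorphic to ℤ × ℤ. -/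
import Mathlib


/-- `SL₃(ℤ)`. -/
abbrev SL3 : Type := Matrix.SpecialLinearGroup (Fin 3) ℤ

/-- The matrix `h_d = [[1,d,0],[0,1,0],[0,0,1]]` as an element of `SL₃(ℤ)`. -/
def hMat (d : ℕ) : SL3 :=
  ⟨!![1, (d : ℤ), 0; 0, 1, 0; 0, 0, 1], by simp [Matrix.det_fin_three]⟩

/-- The subgroup `S′` of `Γ₀(N,3)′ ⊆ SL₃(ℤ)` consisting of the `γ` with
`γ · (d,1,0)ᵀ = ± (d,1,0)ᵀ`; here `Γ₀(N,3)′` is the set of elements of `SL₃(ℤ)` whose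
`(1,2)` and `(1,3)` entries (`1`-indexed) are divisible by `N`. -/
def stabLineGroup' (N d : ℕ) : Subgroup SL3 where
  carrier := {γ |
    ((N : ℤ) ∣ (γ : Matrix (Fin 3) (Fin 3) ℤ) 0 1 ∧
     (N : ℤ) ∣ (γ : Matrix (Fin 3) (Fin 3) ℤ) 0 2) ∧
    ((γ : Matrix (Fin 3) (Fin 3) ℤ).mulVec ![(d : ℤ), 1, 0] = ![(d : ℤ), 1, 0] ∨
     (γ : Matrix (Fin 3) (Fin 3) ℤ).mulVec ![(d : ℤ), 1, 0] = -![(d : ℤ), 1, 0])}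
  one_mem' := by
    refine ⟨⟨?_, ?_⟩, Or.inl ?_⟩
    · rw [Matrix.SpecialLinearGroup.coe_one, Matrix.one_apply_ne (by decide)]
      exact dvd_zero _
    · rw [Matrix.SpecialLinearGroup.coe_one, Matrix.one_apply_ne (by decide)]
      exact dvd_zero _
    · rw [Matrix.SpecialLinearGroup.coe_one, Matrix.one_mulVec]
  mul_mem' := by
    rintro a b ⟨⟨ha1, ha2⟩, hav⟩ ⟨⟨hb1, hb2⟩, hbv⟩
    have hco : ∀ j : Fin 3, ((a * b : SL3) : Matrix (Fin 3) (Fin 3) ℤ) 0 j =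
        (a : Matrix (Fin 3) (Fin 3) ℤ) 0 0 * (b : Matrix (Fin 3) (Fin 3) ℤ) 0 j +
        (a : Matrix (Fin 3) (Fin 3) ℤ) 0 1 * (b : Matrix (Fin 3) (Fin 3) ℤ) 1 j +
        (a : Matrix (Fin 3) (Fin 3) ℤ) 0 2 * (b : Matrix (Fin 3) (Fin 3) ℤ) 2 j := by
      intro j
      rw [Matrix.SpecialLinearGroup.coe_mul, Matrix.mul_apply, Fin.sum_univ_three]
    have hmv : ((a * b : SL3) : Matrix (Fin 3) (Fin 3) ℤ).mulVec ![(d : ℤ), 1, 0] =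
        (a : Matrix (Fin 3) (Fin 3) ℤ).mulVec
          ((b : Matrix (Fin 3) (Fin 3) ℤ).mulVec ![(d : ℤ), 1, 0]) := by
      rw [Matrix.SpecialLinearGroup.coe_mul, Matrix.mulVec_mulVec]
    refine ⟨⟨?_, ?_⟩, ?_⟩
    · rw [hco 1]
      exact dvd_add (dvd_add (hb1.mul_left _) (ha1.mul_right _)) (ha2.mul_right _)
    · rw [hco 2]
      exact dvd_add (dvd_add (hb2.mul_left _) (ha1.mul_right _)) (ha2.mul_right _)
    · rcases hav with ha | ha <;> rcases hbv with hb | hb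
      · left; rw [hmv, hb, ha]
      · right; rw [hmv, hb, Matrix.mulVec_neg, ha]
      · right; rw [hmv, hb, ha]
      · left; rw [hmv, hb, Matrix.mulVec_neg, ha, neg_neg]
  inv_mem' := by
    rintro a ⟨⟨ha1, ha2⟩, hav⟩
    have hAB : (a : Matrix (Fin 3) (Fin 3) ℤ) * ((a⁻¹ : SL3) : Matrix (Fin 3) (Fin 3) ℤ)
        = 1 := by
      rw [← Matrix.SpecialLinearGroup.coe_mul, mul_inv_cancel,
        Matrix.SpecialLinearGroup.coe_one]
    have hBA : ((a⁻¹ : SL3) : Matrix (Fin 3) (Fin 3) ℤ) * (a : Matrix (Fin 3) (Fin 3) ℤ)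
        = 1 := by
      rw [← Matrix.SpecialLinearGroup.coe_mul, inv_mul_cancel,
        Matrix.SpecialLinearGroup.coe_one]
    set A : Matrix (Fin 3) (Fin 3) ℤ := (a : Matrix (Fin 3) (Fin 3) ℤ)
    set B : Matrix (Fin 3) (Fin 3) ℤ := ((a⁻¹ : SL3) : Matrix (Fin 3) (Fin 3) ℤ)
    have key : ∀ j : Fin 3,
        A 0 0 * B 0 j + A 0 1 * B 1 j + A 0 2 * B 2 j =
          (1 : Matrix (Fin 3) (Fin 3) ℤ) 0 j := by
      intro j
      have h := (Matrix.ext_iff.mpr hAB) 0 j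
      rwa [Matrix.mul_apply, Fin.sum_univ_three] at h
    have h0 : (N : ℤ) ∣ A 0 0 * B 0 0 - 1 := by
      have h := key 0
      rw [Matrix.one_apply_eq] at h
      have he : A 0 0 * B 0 0 - 1 = -(A 0 1 * B 1 0) - A 0 2 * B 2 0 := by linarith
      rw [he]
      exact dvd_sub (dvd_neg.mpr (ha1.mul_right _)) (ha2.mul_right _)
    have hgen : ∀ j : Fin 3, j ≠ 0 → (N : ℤ) ∣ B 0 j := by
      intro j hj
      have h := key j
      rw [Matrix.one_apply_ne (Ne.symm hj)] at h
      have hBj : (N : ℤ) ∣ A 0 0 * B 0 j := by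
        have he : A 0 0 * B 0 j = -(A 0 1 * B 1 j) - A 0 2 * B 2 j := by linarith
        rw [he]
        exact dvd_sub (dvd_neg.mpr (ha1.mul_right _)) (ha2.mul_right _)
      have he : B 0 j = B 0 0 * (A 0 0 * B 0 j) - B 0 j * (A 0 0 * B 0 0 - 1) := by ring
      rw [he]
      exact dvd_sub (hBj.mul_left _) (h0.mul_left _)
    refine ⟨⟨hgen 1 (by decide), hgen 2 (by decide)⟩, ?_⟩
    have hBv : B.mulVec (A.mulVec ![(d : ℤ), 1, 0]) = ![(d : ℤ), 1, 0] := by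
      rw [Matrix.mulVec_mulVec, hBA, Matrix.one_mulVec]
    rcases hav with ha | ha
    · left; rwa [ha] at hBv
    · right
      rw [ha, Matrix.mulVec_neg] at hBv
      exact neg_eq_iff_eq_neg.mp hBv

namespace Stmt6


abbrev M3 := Matrix (Fin 3) (Fin 3) ℤ

lemma hMat_inv (d : ℕ) :
    ((hMat d)⁻¹ : SL3) =
      ⟨!![1, -(d : ℤ), 0; 0, 1, 0; 0, 0, 1], by simp [Matrix.det_fin_three]⟩ := by
  apply inv_eq_of_mul_eq_one_right
  apply Subtype.ext
  simp only [Matrix.SpecialLinearGroup.coe_mul, Matrix.SpecialLinearGroup.coe_one]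
  show (!![1, (d : ℤ), 0; 0, 1, 0; 0, 0, 1] : M3) * _ = 1
  rw [Matrix.mul_fin_three, Matrix.one_fin_three]
  norm_num

lemma conj_coe (d : ℕ) (γ : SL3) :
    (((hMat d)⁻¹ * γ * hMat d : SL3) : M3) =
      !![(γ : M3) 0 0 - d * (γ : M3) 1 0,
         (d : ℤ) * (γ : M3) 0 0 + (γ : M3) 0 1 - d * ((d : ℤ) * (γ : M3) 1 0 + (γ : M3) 1 1),
         (γ : M3) 0 2 - d * (γ : M3) 1 2;
         (γ : M3) 1 0, (d : ℤ) * (γ : M3) 1 0 + (γ : M3) 1 1, (γ : M3) 1 2;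
         (γ : M3) 2 0, (d : ℤ) * (γ : M3) 2 0 + (γ : M3) 2 1, (γ : M3) 2 2] := by
  rw [hMat_inv]
  simp only [Matrix.SpecialLinearGroup.coe_mul]
  show (!![1, -(d : ℤ), 0; 0, 1, 0; 0, 0, 1] : M3) * _ * !![1, (d : ℤ), 0; 0, 1, 0; 0, 0, 1] = _
  nth_rewrite 1 [Matrix.eta_fin_three (γ : M3)]
  rw [Matrix.mul_fin_three, Matrix.mul_fin_three]
  ext i j
  fin_cases i <;> fin_cases j <;> simp <;> ring

lemma exists_eps {N d : ℕ} {γ : SL3} (h : γ ∈ stabLineGroup' N d) :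
    ∃ ε : ℤ, (ε = 1 ∨ ε = -1) ∧
      (d : ℤ) * (γ : M3) 0 0 + (γ : M3) 0 1 = ε * d ∧
      (d : ℤ) * (γ : M3) 1 0 + (γ : M3) 1 1 = ε ∧
      (d : ℤ) * (γ : M3) 2 0 + (γ : M3) 2 1 = 0 := by
  rcases h.2 with hv | hv <;>
    [refine ⟨1, Or.inl rfl, ?_, ?_, ?_⟩; refine ⟨-1, Or.inr rfl, ?_, ?_, ?_⟩] <;>
  · first
    | (have h0 := congrFun hv 0
       simp [Matrix.mulVec, dotProduct, Fin.sum_univ_three] at h0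
       linarith)
    | (have h1 := congrFun hv 1
       simp [Matrix.mulVec, dotProduct, Fin.sum_univ_three] at h1
       linarith)
    | (have h2 := congrFun hv 2
       simp [Matrix.mulVec, dotProduct, Fin.sum_univ_three] at h2
       linarith)




def Bmat (d : ℕ) (A : M3) : Matrix (Fin 2) (Fin 2) ℤ :=
  !![A 0 0 - d * A 1 0, A 0 2 - d * A 1 2; A 2 0, A 2 2]

lemma det_Bmat {d : ℕ} {γ : SL3} {ε : ℤ}
    (hε : ε = 1 ∨ ε = -1)
    (r1 : (d : ℤ) * (γ : M3) 0 0 + (γ : M3) 0 1 = ε * d)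
    (r2 : (d : ℤ) * (γ : M3) 1 0 + (γ : M3) 1 1 = ε)
    (r3 : (d : ℤ) * (γ : M3) 2 0 + (γ : M3) 2 1 = 0) :
    (Bmat d (γ : M3)).det = ε := by
  have hdet : ((γ : M3)).det = 1 := γ.2
  rw [Matrix.det_fin_three] at hdet
  have e1 : (γ : M3) 0 1 = ε * d - d * (γ : M3) 0 0 := by linarith
  have e2 : (γ : M3) 1 1 = ε - d * (γ : M3) 1 0 := by linarith
  have e3 : (γ : M3) 2 1 = -((d : ℤ) * (γ : M3) 2 0) := by linarith
  rw [e1, e2, e3] at hdet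
  simp only [Bmat, Matrix.det_fin_two_of]
  rcases hε with rfl | rfl
  · linear_combination hdet
  · linear_combination -hdet

lemma isUnit_det_Bmat {N d : ℕ} {γ : SL3} (h : γ ∈ stabLineGroup' N d) :
    IsUnit (Bmat d (γ : M3)).det := by
  obtain ⟨ε, hε, r1, r2, r3⟩ := exists_eps h
  rw [det_Bmat hε r1 r2 r3]
  rcases hε with rfl | rfl
  · exact isUnit_one
  · exact isUnit_one.neg

noncomputable def πHom (N d : ℕ) :
    ↥(stabLineGroup' N d) →* Matrix.GeneralLinearGroup (Fin 2) ℤ where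
  toFun γ := Matrix.nonsingInvUnit (Bmat d ((γ : SL3) : M3)) (isUnit_det_Bmat γ.2)
  map_one' := by
    apply Units.ext
    show Bmat d (((1 : SL3)) : M3) = 1
    rw [Matrix.SpecialLinearGroup.coe_one]
    ext i j
    fin_cases i <;> fin_cases j <;> simp [Bmat]
  map_mul' a b := by
    apply Units.ext
    obtain ⟨ε, hε, a1, a2, a3⟩ := exists_eps a.2
    show Bmat d (((a : SL3) * (b : SL3)) : M3) =
      Bmat d ((a : SL3) : M3) * Bmat d ((b : SL3) : M3)
    ext i j
    fin_cases i <;> fin_cases j <;>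
      simp [Bmat, Matrix.mul_apply, Fin.sum_univ_three, Fin.sum_univ_two]
    · linear_combination ((b : SL3) : M3) 1 0 * a1 - (d : ℤ) * ((b : SL3) : M3) 1 0 * a2
    · linear_combination ((b : SL3) : M3) 1 2 * a1 - (d : ℤ) * ((b : SL3) : M3) 1 2 * a2
    · linear_combination ((b : SL3) : M3) 1 0 * a3
    · linear_combination ((b : SL3) : M3) 1 2 * a3

lemma πHom_coe {N d : ℕ} (γ : ↥(stabLineGroup' N d)) :
    ((πHom N d γ : Matrix (Fin 2) (Fin 2) ℤ)) = Bmat d ((γ : SL3) : M3) := rfl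


def KSL (D E W s t : ℤ) : SL3 :=
  ⟨!![1 + D * E * s, -(D * D * (E * s)), D * W * t;
      E * s, 1 - D * E * s, W * t;
      0, 0, 1], by
    rw [Matrix.det_fin_three]
    simp
    ring⟩

lemma KSL_mul (D E W s t s' t' : ℤ) :
    KSL D E W s t * KSL D E W s' t' = KSL D E W (s + s') (t + t') := by
  apply Subtype.ext
  show _ * _ = _
  simp only [KSL, Matrix.mul_fin_three]
  ext i j
  fin_cases i <;> fin_cases j <;> simp <;> ring
end Stmt6

/-- **Statement 6.**  Let `d` be a positive divisor of `N` and `Δ = gcd(d, N/d)`.  With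
`h_d = [[1,d,0],[0,1,0],[0,0,1]]` and `S′` the subgroup of `Γ₀(N,3)′` of elements fixing
`(d,1,0)ᵀ` up to sign: (i) for `γ ∈ S′` the matrix `m = h_d⁻¹ γ h_d` has vanishing `(1,2)`
and `(3,2)` entries; (ii) the map sending `γ` to `[[m₁₁,m₁₃],[m₃₁,m₃₃]]` is a group
homomorphism `S′ → GL₂(ℤ)`; (iii) its image is exactly the group of transposes of elements
of `Γ₁(d,Δ)^*`, i.e. the invertible integer matrices `[[a,b],[c,D]]` with `b ≡ 0 (mod d)`
and `a ≡ det (mod Δ)`; and (iv) its kernel is isomorphic to `ℤ × ℤ`. -/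
theorem stmt_6 (N d : ℕ) (hN : 0 < N) (hd0 : 0 < d) (hdN : d ∣ N) :
    (∀ γ ∈ stabLineGroup' N d,
      (((hMat d)⁻¹ * γ * hMat d : SL3) : Matrix (Fin 3) (Fin 3) ℤ) 0 1 = 0 ∧
      (((hMat d)⁻¹ * γ * hMat d : SL3) : Matrix (Fin 3) (Fin 3) ℤ) 2 1 = 0) ∧
    ∃ π : ↥(stabLineGroup' N d) →* Matrix.GeneralLinearGroup (Fin 2) ℤ,
      (∀ γ : ↥(stabLineGroup' N d),
        ((π γ : Matrix (Fin 2) (Fin 2) ℤ)) = Matrix.of fun i j : Fin 2 =>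
          (((hMat d)⁻¹ * (γ : SL3) * hMat d : SL3) : Matrix (Fin 3) (Fin 3) ℤ)
            (![0, 2] i) (![0, 2] j)) ∧
      (∀ m : Matrix.GeneralLinearGroup (Fin 2) ℤ,
        m ∈ π.range ↔
          (((m : Matrix (Fin 2) (Fin 2) ℤ).det = 1 ∨
            (m : Matrix (Fin 2) (Fin 2) ℤ).det = -1) ∧
           (d : ℤ) ∣ (m : Matrix (Fin 2) (Fin 2) ℤ) 0 1 ∧
           ((Nat.gcd d (N / d) : ℕ) : ℤ) ∣
             ((m : Matrix (Fin 2) (Fin 2) ℤ) 0 0 - (m : Matrix (Fin 2) (Fin 2) ℤ).det))) ∧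
      Nonempty (↥π.ker ≃* Multiplicative (ℤ × ℤ)) := by
  -- basic arithmetic facts
  have hdpos : (0 : ℤ) < (d : ℤ) := by exact_mod_cast hd0
  have hΔd : Nat.gcd d (N / d) ∣ d := Nat.gcd_dvd_left _ _
  have hΔw : Nat.gcd d (N / d) ∣ N / d := Nat.gcd_dvd_right _ _
  have hdlN : d ≤ N := Nat.le_of_dvd hN hdN
  have hWpos : 0 < N / d := Nat.div_pos hdlN hd0
  have hΔpos : 0 < Nat.gcd d (N / d) := Nat.gcd_pos_of_pos_left _ hd0
  have hΔposZ : (0 : ℤ) < ((Nat.gcd d (N / d) : ℕ) : ℤ) := by exact_mod_cast hΔpos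
  set e : ℕ := (N / d) / Nat.gcd d (N / d) with hedef
  set d' : ℕ := d / Nat.gcd d (N / d) with hd'def
  have hepos : 0 < e := Nat.div_pos (Nat.le_of_dvd hWpos hΔw) hΔpos
  have hΔe : Nat.gcd d (N / d) * e = N / d := Nat.mul_div_cancel' hΔw
  have hΔd' : Nat.gcd d (N / d) * d' = d := Nat.mul_div_cancel' hΔd
  have hdW : d * (N / d) = N := Nat.mul_div_cancel' hdN
  have hWZ : ((N / d : ℕ) : ℤ) = ((Nat.gcd d (N / d) : ℕ) : ℤ) * (e : ℤ) := by
    exact_mod_cast hΔe.symm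
  have hdZ : (d : ℤ) = ((Nat.gcd d (N / d) : ℕ) : ℤ) * (d' : ℤ) := by
    exact_mod_cast hΔd'.symm
  have hNZ : (N : ℤ) = (d : ℤ) * ((N / d : ℕ) : ℤ) := by exact_mod_cast hdW.symm
  refine ⟨?_, Stmt6.πHom N d, ?_, ?_, ?_⟩
  · -- part (i)
    intro γ hγ
    obtain ⟨ε, hε, r1, r2, r3⟩ := Stmt6.exists_eps hγ
    rw [Stmt6.conj_coe]
    constructor
    · simp (config := { failIfUnchanged := false })
      linear_combination r1 - (d : ℤ) * r2
    · simp (config := { failIfUnchanged := false })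
      linear_combination r3
  · -- part (ii): formula for π
    intro γ
    rw [Stmt6.πHom_coe, Stmt6.conj_coe]
    ext i j
    fin_cases i <;> fin_cases j <;> simp [Stmt6.Bmat]
  · -- part (iii): range
    intro m
    constructor
    · rintro ⟨γ, rfl⟩
      obtain ⟨ε, hε, r1, r2, r3⟩ := Stmt6.exists_eps γ.2
      have hdet : ((Stmt6.πHom N d γ : Matrix (Fin 2) (Fin 2) ℤ)).det = ε := by
        rw [Stmt6.πHom_coe]; exact Stmt6.det_Bmat hε r1 r2 r3
      obtain ⟨⟨hd1, hd2⟩, -⟩ := γ.2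
      refine ⟨?_, ?_, ?_⟩
      · rw [hdet]; exact hε
      · rw [Stmt6.πHom_coe]
        have hB01 : Stmt6.Bmat d ((γ : SL3) : Stmt6.M3) 0 1 =
            ((γ : SL3) : Stmt6.M3) 0 2 - d * ((γ : SL3) : Stmt6.M3) 1 2 := by
          simp [Stmt6.Bmat]
        rw [hB01]
        exact dvd_sub ((Int.natCast_dvd_natCast.mpr hdN).trans hd2) (Dvd.intro _ rfl)
      · rw [hdet, Stmt6.πHom_coe]
        have hB00 : Stmt6.Bmat d ((γ : SL3) : Stmt6.M3) 0 0 =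
            ((γ : SL3) : Stmt6.M3) 0 0 - d * ((γ : SL3) : Stmt6.M3) 1 0 := by
          simp [Stmt6.Bmat]
        rw [hB00]
        have h2 : (d : ℤ) * (ε - ((γ : SL3) : Stmt6.M3) 0 0) = ((γ : SL3) : Stmt6.M3) 0 1 := by
          linear_combination -r1
        have h3 : ((N / d : ℕ) : ℤ) ∣ (ε - ((γ : SL3) : Stmt6.M3) 0 0) := by
          have h4 : (d : ℤ) * ((N / d : ℕ) : ℤ) ∣ (d : ℤ) * (ε - ((γ : SL3) : Stmt6.M3) 0 0) := by
            rw [h2, ← hNZ]; exact hd1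
          exact (mul_dvd_mul_iff_left (ne_of_gt hdpos)).mp h4
        have h5 : ((Nat.gcd d (N / d) : ℕ) : ℤ) ∣ (ε - ((γ : SL3) : Stmt6.M3) 0 0) :=
          (Int.natCast_dvd_natCast.mpr hΔw).trans h3
        have h6 : ((γ : SL3) : Stmt6.M3) 0 0 - d * ((γ : SL3) : Stmt6.M3) 1 0 - ε =
            -(ε - ((γ : SL3) : Stmt6.M3) 0 0) + (d : ℤ) * (-((γ : SL3) : Stmt6.M3) 1 0) := by
          ring
        rw [h6]
        exact dvd_add (dvd_neg.mpr h5)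
          (((Int.natCast_dvd_natCast.mpr hΔd).trans (dvd_refl _)).mul_right _)
    · rintro ⟨hdet2, ⟨b', hb⟩, ⟨k, hk⟩⟩
      have hdetf : (m : Matrix (Fin 2) (Fin 2) ℤ) 0 0 * (m : Matrix (Fin 2) (Fin 2) ℤ) 1 1 -
          (m : Matrix (Fin 2) (Fin 2) ℤ) 0 1 * (m : Matrix (Fin 2) (Fin 2) ℤ) 1 0 =
          (m : Matrix (Fin 2) (Fin 2) ℤ).det := (Matrix.det_fin_two _).symm
      set A : Matrix (Fin 2) (Fin 2) ℤ := (m : Matrix (Fin 2) (Fin 2) ℤ) with hA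
      set ε : ℤ := A.det with hεdef
      have hε2 : ε * ε = 1 := by rcases hdet2 with h | h <;> rw [h] <;> norm_num
      set u : ℤ := Int.gcdA (d : ℤ) ((N / d : ℕ) : ℤ) with hu
      set v : ℤ := Int.gcdB (d : ℤ) ((N / d : ℕ) : ℤ) with hv
      have hbez : ((Nat.gcd d (N / d) : ℕ) : ℤ) = (d : ℤ) * u + ((N / d : ℕ) : ℤ) * v := by
        have h := Int.gcd_eq_gcd_ab (d : ℤ) ((N / d : ℕ) : ℤ)
        rwa [Int.gcd_natCast_natCast] at h
      set x : ℤ := -(u * k) with hx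
      set y : ℤ := -b' with hy
      set a : ℤ := A 0 0
      set b : ℤ := A 0 1
      set c : ℤ := A 1 0
      set D2 : ℤ := A 1 1
      have hdet3 : Matrix.det
          (!![a + d * x, d * ε - d * (a + d * x), b + d * y;
              x, ε - d * x, y;
              c, -(d * c), D2] : Stmt6.M3) = 1 := by
        rw [Matrix.det_fin_three]
        simp (config := { failIfUnchanged := false })
        linear_combination ε * hdetf + hε2
      refine ⟨⟨⟨_, hdet3⟩, ⟨⟨⟨-(v * k), ?_⟩, ⟨(0 : ℤ), ?_⟩⟩, ?_⟩⟩, ?_⟩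
      · show (d : ℤ) * ε - d * (a + d * x) = (N : ℤ) * -(v * k)
        rw [hx]
        linear_combination (-(d : ℤ)) * hk + (-((d : ℤ) * k)) * hbez + (v * k) * hNZ
      · show b + (d : ℤ) * y = (N : ℤ) * 0
        rw [hy]
        linear_combination hb
      · rcases hdet2 with h1 | h1
        · left
          funext i
          fin_cases i <;>
            simp [Matrix.mulVec, dotProduct, Fin.sum_univ_three, ← hεdef, h1] <;> ring
        · right
          funext i
          fin_cases i <;>
            simp [Matrix.mulVec, dotProduct, Fin.sum_univ_three, ← hεdef, h1] <;> ring
      · apply Units.ext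
        show Stmt6.Bmat d _ = A
        ext i j
        fin_cases i <;> fin_cases j <;> simp [Stmt6.Bmat] <;> ring
  · -- part (iv): kernel
    have hKmem : ∀ s t : ℤ,
        Stmt6.KSL (d : ℤ) (e : ℤ) ((N / d : ℕ) : ℤ) s t ∈ stabLineGroup' N d := by
      intro s t
      refine ⟨⟨⟨-((d' : ℤ) * s), ?_⟩, ⟨t, ?_⟩⟩, Or.inl ?_⟩
      · show -((d : ℤ) * (d : ℤ) * ((e : ℤ) * s)) = (N : ℤ) * -((d' : ℤ) * s)
        linear_combination ((d' : ℤ) * s) * hNZ + ((d : ℤ) * (d' : ℤ) * s) * hWZ -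
          ((d : ℤ) * (e : ℤ) * s) * hdZ
      · show (d : ℤ) * ((N / d : ℕ) : ℤ) * t = (N : ℤ) * t
        linear_combination (-t) * hNZ
      · funext i
        fin_cases i <;>
          simp [Stmt6.KSL, Matrix.mulVec, dotProduct, Fin.sum_univ_three] <;> ring
    have hKker : ∀ s t : ℤ,
        (⟨Stmt6.KSL (d : ℤ) (e : ℤ) ((N / d : ℕ) : ℤ) s t, hKmem s t⟩ :
          ↥(stabLineGroup' N d)) ∈ (Stmt6.πHom N d).ker := by
      intro s t
      rw [MonoidHom.mem_ker]
      apply Units.ext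
      show Stmt6.Bmat d _ = (1 : Matrix (Fin 2) (Fin 2) ℤ)
      ext i j
      fin_cases i <;> fin_cases j <;>
        simp [Stmt6.Bmat, Stmt6.KSL, Matrix.one_apply, Matrix.vecHead, Matrix.vecTail] <;> ring
    let φ : Multiplicative (ℤ × ℤ) →* ↥(Stmt6.πHom N d).ker :=
      { toFun := fun p =>
          ⟨⟨Stmt6.KSL (d : ℤ) (e : ℤ) ((N / d : ℕ) : ℤ) p.toAdd.1 p.toAdd.2, hKmem _ _⟩,
            hKker _ _⟩
        map_one' := by
          apply Subtype.ext
          apply Subtype.ext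
          apply Subtype.ext
          show (Stmt6.KSL (d : ℤ) (e : ℤ) ((N / d : ℕ) : ℤ) 0 0 : Stmt6.M3) = _
          ext i j
          fin_cases i <;> fin_cases j <;> simp [Stmt6.KSL, Matrix.one_apply, Matrix.vecHead, Matrix.vecTail]
        map_mul' := fun p q => by
          apply Subtype.ext
          apply Subtype.ext
          exact (Stmt6.KSL_mul (d : ℤ) (e : ℤ) ((N / d : ℕ) : ℤ)
            p.toAdd.1 p.toAdd.2 q.toAdd.1 q.toAdd.2).symm }
    have hinj : Function.Injective φ := by
      rw [injective_iff_map_eq_one]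
      intro p hp
      have h1 : (Stmt6.KSL (d : ℤ) (e : ℤ) ((N / d : ℕ) : ℤ) p.toAdd.1 p.toAdd.2 :
          Stmt6.M3) = ((1 : SL3) : Stmt6.M3) :=
        congrArg (fun z : ↥(Stmt6.πHom N d).ker =>
          (((z : ↥(stabLineGroup' N d)) : SL3) : Stmt6.M3)) hp
      have h10 := congrFun (congrFun h1 1) 0
      have h12 := congrFun (congrFun h1 1) 2
      simp [Stmt6.KSL, Matrix.SpecialLinearGroup.coe_one, Matrix.one_apply,
        Matrix.vecHead, Matrix.vecTail] at h10 h12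
      have hene : ((e : ℕ) : ℤ) ≠ 0 := by exact_mod_cast hepos.ne'
      have heneN : e ≠ 0 := hepos.ne'
      have hWne : ((N / d : ℕ) : ℤ) ≠ 0 := by exact_mod_cast hWpos.ne'
      have hWneN : N / d ≠ 0 := hWpos.ne'
      have hs : p.toAdd.1 = 0 := by
        rcases h10 with h | h
        · exact absurd h heneN
        · exact h
      have ht : p.toAdd.2 = 0 := by
        rcases h12 with h | h
        · exfalso
          rw [← Int.natCast_div] at h
          exact hWneN (by exact_mod_cast h)
        · exact h
      have hpt : p.toAdd = 0 := Prod.ext hs ht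
      exact Multiplicative.toAdd.injective hpt
    have hsurj : Function.Surjective φ := by
      rintro ⟨⟨γ, hmem⟩, hker⟩
      obtain ⟨ε, hε, r1, r2, r3⟩ := Stmt6.exists_eps hmem
      rw [MonoidHom.mem_ker] at hker
      have hB : Stmt6.Bmat d (γ : Stmt6.M3) = 1 := congrArg Units.val hker
      have hdet1 : ε = 1 := by
        have h := Stmt6.det_Bmat hε r1 r2 r3
        rw [hB] at h
        simpa using h.symm
      subst hdet1
      have b00 : (γ : Stmt6.M3) 0 0 - d * (γ : Stmt6.M3) 1 0 = 1 := by
        have h := congrFun (congrFun hB 0) 0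
        simpa [Stmt6.Bmat, Matrix.one_apply] using h
      have b01 : (γ : Stmt6.M3) 0 2 - d * (γ : Stmt6.M3) 1 2 = 0 := by
        have h := congrFun (congrFun hB 0) 1
        simpa [Stmt6.Bmat, Matrix.one_apply] using h
      have b10 : (γ : Stmt6.M3) 2 0 = 0 := by
        have h := congrFun (congrFun hB 1) 0
        simpa [Stmt6.Bmat, Matrix.one_apply] using h
      have b11 : (γ : Stmt6.M3) 2 2 = 1 := by
        have h := congrFun (congrFun hB 1) 1
        simpa [Stmt6.Bmat, Matrix.one_apply] using h
      obtain ⟨⟨hd1, hd2⟩, -⟩ := hmem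
      have hG01 : (γ : Stmt6.M3) 0 1 = -((d : ℤ) * (d : ℤ) * (γ : Stmt6.M3) 1 0) := by
        linear_combination r1 - (d : ℤ) * b00
      have hcop : IsCoprime ((e : ℕ) : ℤ) ((d' : ℕ) : ℤ) :=
        Nat.isCoprime_iff_coprime.mpr (Nat.coprime_div_gcd_div_gcd hΔpos).symm
      have hNd2 : (N : ℤ) ∣ (d : ℤ) * (d : ℤ) * (γ : Stmt6.M3) 1 0 := by
        rw [hG01] at hd1
        exact dvd_neg.mp hd1
      have key : ((d : ℤ) * ((Nat.gcd d (N / d) : ℕ) : ℤ)) * ((e : ℕ) : ℤ) ∣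
          ((d : ℤ) * ((Nat.gcd d (N / d) : ℕ) : ℤ)) * ((d' : ℤ) * (γ : Stmt6.M3) 1 0) := by
        have e1 : ((d : ℤ) * ((Nat.gcd d (N / d) : ℕ) : ℤ)) * ((e : ℕ) : ℤ) = (N : ℤ) := by
          rw [hNZ, hWZ]; ring
        have e2 : ((d : ℤ) * ((Nat.gcd d (N / d) : ℕ) : ℤ)) * ((d' : ℤ) * (γ : Stmt6.M3) 1 0) =
            (d : ℤ) * (d : ℤ) * (γ : Stmt6.M3) 1 0 := by
          rw [hdZ]; ring
        rw [e1, e2]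
        exact hNd2
      have hed : ((e : ℕ) : ℤ) ∣ (d' : ℤ) * (γ : Stmt6.M3) 1 0 :=
        (mul_dvd_mul_iff_left (ne_of_gt (mul_pos hdpos hΔposZ))).mp key
      obtain ⟨s, hs⟩ := hcop.dvd_of_dvd_mul_left hed
      have hWd : ((N / d : ℕ) : ℤ) ∣ (γ : Stmt6.M3) 1 2 := by
        have hG02 : (γ : Stmt6.M3) 0 2 = (d : ℤ) * (γ : Stmt6.M3) 1 2 := by
          linear_combination b01
        rw [hG02, hNZ] at hd2
        exact (mul_dvd_mul_iff_left (ne_of_gt hdpos)).mp hd2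
      obtain ⟨t, ht⟩ := hWd
      rw [Int.natCast_div] at ht
      refine ⟨Multiplicative.ofAdd (s, t), ?_⟩
      apply Subtype.ext
      apply Subtype.ext
      apply Subtype.ext
      show (Stmt6.KSL (d : ℤ) (e : ℤ) ((N / d : ℕ) : ℤ) s t : Stmt6.M3) = (γ : Stmt6.M3)
      ext i j
      fin_cases i <;> fin_cases j <;>
        simp (config := { failIfUnchanged := false }) [Stmt6.KSL, -Int.natCast_div]
      · linear_combination -b00 - (d : ℤ) * hs
      · linear_combination -hG01 + (d : ℤ) * (d : ℤ) * hs
      · linear_combination -b01 - (d : ℤ) * ht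
      · linear_combination -hs
      · linear_combination -r2 + (d : ℤ) * hs
      · linear_combination -ht
      · linear_combination -b10
      · linear_combination -r3 + (d : ℤ) * b10
      · linear_combination -b11
    exact ⟨(MulEquiv.ofBijective φ ⟨hinj, hsurj⟩).symm⟩
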